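/- arXiv:1710.09673 — 2 statements merged into one kernel-verified Lean document; each statement's English description precedes it below -/
import Mathlib

section
/- For every p ∈ [1, ∞], the transfer operator L_{F,G}, defined on bounded continuous functions, extends to a bounded operator from L^p(ℝ^d) to L^p(ℝ^d); moreover ‖L_{F,G}u‖_{L^p} ≤ α·‖u‖_{L^p} for all u ∈ L^p(ℝ^d), and the support of L_{F,G}u is contained in U. -/
open MeasureTheory Filter Set
open scoped FourierTransform ENNReal NNReal Topology

noncomputable section

abbrev Euc (d : ℕ) := EuclideanSpace ℝ (Fin d)

/-- C^r smoothness for a real exponent r > 0: the map is C^⌊r⌋ and its ⌊r⌋-th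
derivative is (r−⌊r⌋)-Hölder on compact sets. -/
def ContDiffHolder {E F : Type*} [NormedAddCommGroup E] [NormedSpace ℝ E]
    [NormedAddCommGroup F] [NormedSpace ℝ F] (r : ℝ) (f : E → F) : Prop :=
  ContDiff ℝ (⌊r⌋₊ : ℕ) f ∧
    ∀ K : Set E, IsCompact K → ∃ C : ℝ, ∀ x ∈ K, ∀ y ∈ K,
      ‖iteratedFDeriv ℝ ⌊r⌋₊ f x - iteratedFDeriv ℝ ⌊r⌋₊ f y‖ ≤ C * ‖x - y‖ ^ (r - ⌊r⌋₊)

/-- Transfer operator (L_{F,G} u)(x) = ∑_{y : F y = x} G(y)·u(y). -/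
def transferOp (d : ℕ) (F : Euc d → Euc d) (G : Euc d → ℂ) (u : Euc d → ℂ) :
    Euc d → ℂ :=
  fun x => ∑' y : {y : Euc d // F y = x}, G y * u y

/-- The constant α = α(F,G,p). -/
def alphaConst (d : ℕ) (F : Euc d → Euc d) (G : Euc d → ℂ) (p : ℝ≥0∞)
    (U U' : Set (Euc d)) : ℝ≥0∞ :=
  if p = 1 then eLpNorm (fun y => G y * (fderiv ℝ F y).det) ∞ volume
  else
    (⨆ x ∈ (F '' U') ∩ U, ∑' y : {y : Euc d // F y = x},
        ENNReal.ofReal (1 / |(fderiv ℝ F y).det|)) ^ (1 - (1/p).toReal) *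
      eLpNorm (fun y => G y * (fderiv ℝ F y).det) ∞ volume

section AuxLemmas

lemma fiber_tsum_eq_indicator {d : ℕ} {β : Type*} [AddCommMonoid β] [TopologicalSpace β]
    [T2Space β] (F : Euc d → Euc d) {V S : Set (Euc d)} (hSV : S ⊆ V)
    (hinj : Set.InjOn F V) (v : Euc d → β) (x : Euc d) :
    ∑' y : {y : Euc d // F y = x}, Set.indicator S v (y : Euc d)
      = Set.indicator (F '' S) (fun z => v (Function.invFunOn F V z)) x := by
  by_cases hx : ∃ y ∈ S, F y = x
  · obtain ⟨y₀, hy₀S, hy₀F⟩ := hx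
    have hxim : x ∈ F '' S := ⟨y₀, hy₀S, hy₀F⟩
    have hg : Function.invFunOn F V x = y₀ := by
      have h1 : F (Function.invFunOn F V x) = x := Function.invFunOn_eq ⟨y₀, hSV hy₀S, hy₀F⟩
      exact hinj (Function.invFunOn_mem ⟨y₀, hSV hy₀S, hy₀F⟩) (hSV hy₀S) (h1.trans hy₀F.symm)
    rw [Set.indicator_of_mem hxim, hg]
    have := tsum_eq_single (L := SummationFilter.unconditional _) (f := fun y : {y : Euc d // F y = x} =>
        Set.indicator S v (y : Euc d)) ⟨y₀, hy₀F⟩ ?_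
    · rw [this]; exact Set.indicator_of_mem hy₀S v
    · rintro ⟨y, hyF⟩ hne
      refine Set.indicator_of_notMem (fun hyS => hne ?_) v
      exact Subtype.ext (hinj (hSV hyS) (hSV hy₀S) (hyF.trans hy₀F.symm))
  · have h0 : ∀ y : {y : Euc d // F y = x}, Set.indicator S v (y : Euc d) = 0 := by
      rintro ⟨y, hyF⟩; exact Set.indicator_of_notMem (fun hyS => hx ⟨y, hyS, hyF⟩) v
    rw [tsum_congr h0, tsum_zero, Set.indicator_of_notMem]
    rintro ⟨y, hyS, hyF⟩; exact hx ⟨y, hyS, hyF⟩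

lemma fiber_summable {d : ℕ} {β : Type*} [AddCommGroup β] [TopologicalSpace β]
    [IsTopologicalAddGroup β] (F : Euc d → Euc d) {V S : Set (Euc d)} (hSV : S ⊆ V)
    (hinj : Set.InjOn F V) (v : Euc d → β) (x : Euc d) :
    Summable (fun y : {y : Euc d // F y = x} => Set.indicator S v (y : Euc d)) := by
  by_cases hx : ∃ y ∈ S, F y = x
  · obtain ⟨y₀, hy₀S, hy₀F⟩ := hx
    apply summable_of_ne_finset_zero (s := {(⟨y₀, hy₀F⟩ : {y : Euc d // F y = x})})
    rintro ⟨y, hyF⟩ hne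
    refine Set.indicator_of_notMem (fun hyS => hne ?_) v
    simp only [Finset.mem_singleton]
    exact Subtype.ext (hinj (hSV hyS) (hSV hy₀S) (hyF.trans hy₀F.symm))
  · have h0 : (fun y : {y : Euc d // F y = x} => Set.indicator S v (y : Euc d)) = 0 := by
      funext ⟨y, hyF⟩; exact Set.indicator_of_notMem (fun hyS => hx ⟨y, hyS, hyF⟩) v
    rw [h0]; exact summable_zero

lemma cont_le_eLpNormEssSup {d : ℕ} {f : Euc d → ℂ} (hf : Continuous f) (x : Euc d) :
    (‖f x‖₊ : ℝ≥0∞) ≤ eLpNormEssSup f (volume : Measure (Euc d)) := by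
  by_contra h
  push_neg at h
  set c := eLpNormEssSup f (volume : Measure (Euc d)) with hc
  have hopen : IsOpen {y : Euc d | c < (‖f y‖₊ : ℝ≥0∞)} :=
    isOpen_lt continuous_const (ENNReal.continuous_coe.comp hf.nnnorm)
  have hpos : 0 < volume {y : Euc d | c < (‖f y‖₊ : ℝ≥0∞)} :=
    hopen.measure_pos volume ⟨x, h⟩
  have hae : ∀ᵐ y : Euc d, (‖f y‖₊ : ℝ≥0∞) ≤ c := ae_le_eLpNormEssSup
  rw [ae_iff] at hae
  have : {y : Euc d | c < (‖f y‖₊ : ℝ≥0∞)} ⊆ {y : Euc d | ¬(‖f y‖₊ : ℝ≥0∞) ≤ c} := by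
    intro y hy; exact not_le.2 hy
  exact absurd (measure_mono_null this hae) hpos.ne'

lemma indicator_comp_invFunOn_measurable {d : ℕ} {β : Type*} [MeasurableSpace β] [Zero β]
    {F : Euc d → Euc d} {V S : Set (Euc d)} (hS : MeasurableSet S) (hSV : S ⊆ V)
    (hinj : Set.InjOn F V) (hdiff : Differentiable ℝ F)
    (Θ : Euc d → β) (hΘ : Measurable Θ) :
    Measurable (Set.indicator (F '' S) fun z => Θ (Function.invFunOn F V z)) := by
  have hfd : ∀ y ∈ S, HasFDerivWithinAt F (fderiv ℝ F y) S y :=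
    fun y _ => (hdiff y).hasFDerivAt.hasFDerivWithinAt
  have hemb : MeasurableEmbedding (S.restrict F) :=
    measurableEmbedding_of_fderivWithin hS hfd (hinj.mono hSV)
  have hFS : MeasurableSet (F '' S) := measurable_image_of_fderivWithin hS hfd (hinj.mono hSV)
  obtain ⟨w, hw, hwc⟩ := hemb.exists_measurable_extend (hΘ.comp measurable_subtype_coe)
    (fun _ => ⟨0⟩)
  have heq : Set.indicator (F '' S) (fun z => Θ (Function.invFunOn F V z))
      = Set.indicator (F '' S) w := by
    ext z
    by_cases hz : z ∈ F '' S
    · rw [Set.indicator_of_mem hz, Set.indicator_of_mem hz]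
      obtain ⟨y, hy, rfl⟩ := hz
      have hg : Function.invFunOn F V (F y) = y := by
        have h1 : F (Function.invFunOn F V (F y)) = F y :=
          Function.invFunOn_eq ⟨y, hSV hy, rfl⟩
        exact hinj (Function.invFunOn_mem ⟨y, hSV hy, rfl⟩) (hSV hy) h1
      have hwy : w (F y) = Θ y := congrFun hwc (⟨y, hy⟩ : S)
      rw [hg, hwy]
    · rw [Set.indicator_of_notMem hz, Set.indicator_of_notMem hz]
  rw [heq]
  exact hw.indicator hFS

end AuxLemmas

/-- for every p ∈ [1,∞] the transfer operator L_{F,G} is bounded from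
L^p(ℝ^d) to L^p(ℝ^d) with ‖L_{F,G}u‖_{L^p} ≤ α·‖u‖_{L^p}, and supp(L_{F,G}u) ⊆ U. -/
theorem transfer_operator_Lp_bound
    (d : ℕ) (hd : 1 ≤ d) (U U' : Set (Euc d))
    (hUopen : IsOpen U) (hU'open : IsOpen U')
    (hUne : U.Nonempty) (hU'ne : U'.Nonempty)
    (hUbdd : Bornology.IsBounded U) (hU'bdd : Bornology.IsBounded U')
    (r : ℝ) (hr : 1 < r) (F : Euc d → Euc d) (hF : ContDiffHolder r F)
    (hne : (U' ∩ F ⁻¹' U).Nonempty)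
    (rt : ℝ) (hrt0 : 0 < rt) (hrtr : rt ≤ r)
    (G : Euc d → ℂ) (hG : ContDiffHolder rt G)
    (hGsupp : tsupport G ⊆ U' ∩ F ⁻¹' U)
    (N : ℕ) (K V : Fin N → Set (Euc d))
    (hKcomp : ∀ j, IsCompact (K j))
    (hKdisj : ∀ i j, i ≠ j → interior (K i) ∩ interior (K j) = ∅)
    (hKunion : (⋃ j, K j) = tsupport G)
    (hVopen : ∀ j, IsOpen (V j)) (hKV : ∀ j, K j ⊆ V j)
    (hFinj : ∀ j, Set.InjOn F (V j))
    (hFdet : ∀ j, ∀ x ∈ V j, (fderiv ℝ F x).det ≠ 0) :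
    ∀ p : ℝ≥0∞, 1 ≤ p → ∀ u : Euc d → ℂ, MemLp u p volume →
      MemLp (transferOp d F G u) p volume ∧
      eLpNorm (transferOp d F G u) p volume ≤
        alphaConst d F G p U U' * eLpNorm u p volume ∧
      tsupport (transferOp d F G u) ⊆ U := by
  classical
  intro p hp u hu
  have hp0 : p ≠ 0 := fun h => by simp [h] at hp
  -- smoothness consequences
  have hn1 : 1 ≤ ⌊r⌋₊ := Nat.le_floor (by exact_mod_cast hr.le)
  have hFc1 : ContDiff ℝ 1 F := hF.1.of_le (by exact_mod_cast hn1)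
  have hFcont : Continuous F := hFc1.continuous
  have hFdiff : Differentiable ℝ F := hFc1.differentiable one_ne_zero
  have hGcont : Continuous G := hG.1.continuous
  have hdetcont : Continuous fun y : Euc d => (fderiv ℝ F y).det :=
    ContinuousLinearMap.continuous_det.comp (hFc1.continuous_fderiv one_ne_zero)
  -- the partition
  set S : Fin N → Set (Euc d) := fun j => K j \ (⋃ i, ⋃ (_ : i < j), K i) with hSdef
  have hSK : ∀ j, S j ⊆ K j := fun j => diff_subset
  have hSV : ∀ j, S j ⊆ V j := fun j => (hSK j).trans (hKV j)
  have hStsupp : ∀ j, S j ⊆ tsupport G := fun j =>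
    (hSK j).trans (hKunion ▸ subset_iUnion K j)
  have hSmeas : ∀ j, MeasurableSet (S j) := fun j =>
    ((hKcomp j).measurableSet).diff
      (MeasurableSet.iUnion fun i => MeasurableSet.iUnion fun _ => (hKcomp i).measurableSet)
  have hSuniq : ∀ {y : Euc d} {i j : Fin N}, y ∈ S i → y ∈ S j → i = j := by
    intro y i j hi hj
    by_contra hne'
    rcases lt_or_gt_of_ne hne' with h | h
    · exact hj.2 (Set.mem_iUnion.2 ⟨i, Set.mem_iUnion.2 ⟨h, hi.1⟩⟩)
    · exact hi.2 (Set.mem_iUnion.2 ⟨j, Set.mem_iUnion.2 ⟨h, hj.1⟩⟩)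
  have hScover : ∀ y ∈ tsupport G, ∃ j, y ∈ S j := by
    intro y hy
    rw [← hKunion] at hy
    obtain ⟨j₀, hj₀⟩ := Set.mem_iUnion.1 hy
    obtain ⟨j, hjmem, hjmin⟩ := Finset.exists_min_image
      (Finset.univ.filter fun i => y ∈ K i) id ⟨j₀, by simp [hj₀]⟩
    refine ⟨j, (Finset.mem_filter.1 hjmem).2, ?_⟩
    intro hmem
    obtain ⟨i, hi⟩ := Set.mem_iUnion.1 hmem
    obtain ⟨hij, hiK⟩ := Set.mem_iUnion.1 hi
    exact absurd (hjmin i (by simp [hiK])) (not_le.2 hij)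
  -- local inverses
  set g : Fin N → Euc d → Euc d := fun j => Function.invFunOn F (V j) with hgdef
  have hgF : ∀ j, ∀ y ∈ V j, g j (F y) = y := by
    intro j y hy
    have h1 : F (g j (F y)) = F y := Function.invFunOn_eq ⟨y, hy, rfl⟩
    exact hFinj j (Function.invFunOn_mem ⟨y, hy, rfl⟩) hy h1
  have hgS : ∀ j, ∀ {z : Euc d}, z ∈ F '' S j → g j z ∈ S j ∧ F (g j z) = z := by
    intro j z hz
    obtain ⟨y, hy, rfl⟩ := hz
    rw [hgF j y (hSV j hy)]
    exact ⟨hy, rfl⟩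
  -- decomposition of the transfer operator
  have hdecompC : ∀ (v : Euc d → ℂ) (x : Euc d),
      transferOp d F G v x
        = ∑ j, Set.indicator (F '' S j) (fun z => G (g j z) * v (g j z)) x := by
    intro v x
    have h1 : ∀ y : {y : Euc d // F y = x},
        G ↑y * v ↑y = ∑ j, Set.indicator (S j) (fun y' => G y' * v y') (y : Euc d) := by
      intro y
      by_cases hy : (y : Euc d) ∈ tsupport G
      · obtain ⟨j₀, hj₀⟩ := hScover _ hy
        rw [Finset.sum_eq_single j₀
          (fun b _ hb => Set.indicator_of_notMem (fun hmem => hb (hSuniq hmem hj₀))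
            (fun y' => G y' * v y'))
          (fun habs => absurd (Finset.mem_univ j₀) habs)]
        exact (Set.indicator_of_mem hj₀ (fun y' => G y' * v y')).symm
      · have hG0 : G ↑y = 0 := image_eq_zero_of_notMem_tsupport hy
        have : ∀ j : Fin N, Set.indicator (S j) (fun y' => G y' * v y') (y : Euc d) = 0 := by
          intro j
          by_cases hyj : (y : Euc d) ∈ S j
          · rw [Set.indicator_of_mem hyj, hG0, zero_mul]
          · exact Set.indicator_of_notMem hyj _
        simp [hG0, this]
    calc transferOp d F G v x
        = ∑' y : {y : Euc d // F y = x},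
            ∑ j, Set.indicator (S j) (fun y' => G y' * v y') (y : Euc d) := tsum_congr h1
      _ = ∑ j, ∑' y : {y : Euc d // F y = x},
            Set.indicator (S j) (fun y' => G y' * v y') (y : Euc d) :=
          Summable.tsum_finsetSum (fun j _ => fiber_summable F (hSV j) (hFinj j) (fun y => G y * v y) x)
      _ = ∑ j, Set.indicator (F '' S j) (fun z => G (g j z) * v (g j z)) x :=
          Finset.sum_congr rfl fun j _ =>
            fiber_tsum_eq_indicator F (hSV j) (hFinj j) (fun y => G y * v y) x
  -- support claim
  have hsuppLu : tsupport (transferOp d F G u) ⊆ U := by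
    have hsub : Function.support (transferOp d F G u) ⊆ ⋃ j, F '' K j := by
      intro x hx
      by_contra hxC
      apply hx
      have hz : ∀ y : {y : Euc d // F y = x}, G ↑y * u ↑y = 0 := by
        intro y
        by_cases hyG : G ↑y = 0
        · simp [hyG]
        · exfalso
          apply hxC
          have hyt : (y : Euc d) ∈ tsupport G := subset_tsupport G (by exact hyG)
          rw [← hKunion] at hyt
          obtain ⟨j, hj⟩ := Set.mem_iUnion.1 hyt
          exact Set.mem_iUnion.2 ⟨j, ⟨y, hj, y.2⟩⟩
      show transferOp d F G u x = 0
      rw [transferOp, tsum_congr hz, tsum_zero]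
    have hclosed : IsClosed (⋃ j, F '' K j) :=
      isClosed_iUnion_of_finite fun j => ((hKcomp j).image hFcont).isClosed
    refine (closure_minimal hsub hclosed).trans ?_
    intro x hx
    obtain ⟨j, y, hy, rfl⟩ := by
      simpa using hx
    have hyt : y ∈ tsupport G := hKunion ▸ Set.mem_iUnion.2 ⟨j, hy⟩
    exact (hGsupp hyt).2
  -- derivative-within facts and measurable images
  have hfdW : ∀ (s : Set (Euc d)), ∀ y ∈ s, HasFDerivWithinAt F (fderiv ℝ F y) s y :=
    fun s y _ => (hFdiff y).hasFDerivAt.hasFDerivWithinAt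
  have hFSmeas : ∀ j, MeasurableSet (F '' S j) := fun j =>
    measurable_image_of_fderivWithin (hSmeas j) (hfdW (S j)) ((hFinj j).mono (hSV j))
  -- change of variables
  have hCOV : ∀ (j : Fin N) (Θ : Euc d → ℝ≥0∞),
      ∫⁻ z, Set.indicator (F '' S j) (fun z => Θ (g j z)) z
        = ∫⁻ y in S j, ENNReal.ofReal |(fderiv ℝ F y).det| * Θ y := by
    intro j Θ
    rw [lintegral_indicator (hFSmeas j), lintegral_image_eq_lintegral_abs_det_fderiv_mul
      volume (hSmeas j) (hfdW (S j)) ((hFinj j).mono (hSV j)) (fun z => Θ (g j z))]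
    refine setLIntegral_congr_fun (hSmeas j) (fun y hy => ?_)
    rw [hgF j y (hSV j hy)]
  -- a.e. lifting along fibers
  have haeLift : ∀ {P : Euc d → Prop}, (∀ᵐ y : Euc d, P y) →
      ∀ᵐ x : Euc d, ∀ y : Euc d, F y = x → P y := by
    intro P hP
    have hZ : volume {y : Euc d | ¬ P y} = 0 := by
      rw [← ae_iff]; exact hP
    have himg : volume (F '' {y : Euc d | ¬ P y}) = 0 :=
      addHaar_image_eq_zero_of_differentiableOn_of_addHaar_eq_zero volume
        hFdiff.differentiableOn hZ
    rw [ae_iff]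
    refine measure_mono_null ?_ himg
    intro x hx
    simp only [Set.mem_setOf_eq] at hx
    push_neg at hx
    obtain ⟨y, hyF, hyP⟩ := hx
    exact ⟨y, hyP, hyF⟩
  -- measurable representative of u
  obtain ⟨u', hu'm, huu'⟩ : ∃ u' : Euc d → ℂ, StronglyMeasurable u' ∧ u =ᶠ[ae volume] u' :=
    ⟨hu.aestronglyMeasurable.mk u, hu.aestronglyMeasurable.stronglyMeasurable_mk,
      hu.aestronglyMeasurable.ae_eq_mk⟩
  have hLuae : transferOp d F G u =ᶠ[ae volume] transferOp d F G u' := by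
    filter_upwards [haeLift huu'] with x hx
    exact tsum_congr fun y => by rw [hx y y.2]
  have hu'mem : MemLp u' p volume := hu.ae_eq huu'
  have heLpu' : eLpNorm u' p volume = eLpNorm u p volume := eLpNorm_congr_ae huu'.symm
  -- strong measurability of the transfer operator applied to u'
  have hLu'meas : Measurable (transferOp d F G u') := by
    have heq : transferOp d F G u'
        = fun x => ∑ j, Set.indicator (F '' S j) (fun z => G (g j z) * u' (g j z)) x :=
      funext (hdecompC u')
    rw [heq]
    exact Finset.measurable_sum _ fun j _ =>
      indicator_comp_invFunOn_measurable (hSmeas j) (hSV j) (hFinj j) hFdiff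
        (fun y => G y * u' y) (hGcont.measurable.mul hu'm.measurable)
  have hLu'aesm : AEStronglyMeasurable (transferOp d F G u') volume :=
    hLu'meas.stronglyMeasurable.aestronglyMeasurable
  have hLuaesm : AEStronglyMeasurable (transferOp d F G u) volume :=
    hLu'aesm.congr hLuae.symm
  -- the constant M
  set M : ℝ≥0∞ := eLpNorm (fun y => G y * (fderiv ℝ F y).det) ∞ volume with hMdef
  have hGdetcont : Continuous fun y : Euc d => G y * ((fderiv ℝ F y).det : ℂ) :=
    hGcont.mul (Complex.continuous_ofReal.comp hdetcont)
  have hMbound : ∀ y : Euc d, (‖G y * ((fderiv ℝ F y).det : ℂ)‖₊ : ℝ≥0∞) ≤ M := by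
    intro y
    have := cont_le_eLpNormEssSup hGdetcont y
    rwa [hMdef, eLpNorm_exponent_top]
  -- pointwise factorization of |G|
  have hdet1 : ∀ y : Euc d, (fderiv ℝ F y).det ≠ 0 →
      ENNReal.ofReal |(fderiv ℝ F y).det| * ENNReal.ofReal (1 / |(fderiv ℝ F y).det|) = 1 := by
    intro y h0
    rw [← ENNReal.ofReal_mul (abs_nonneg _), mul_one_div,
      div_self (abs_ne_zero.2 h0), ENNReal.ofReal_one]
  have hGfac : ∀ y : Euc d, (fderiv ℝ F y).det ≠ 0 →
      (‖G y‖₊ : ℝ≥0∞) = (‖G y * ((fderiv ℝ F y).det : ℂ)‖₊ : ℝ≥0∞)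
        * ENNReal.ofReal (1 / |(fderiv ℝ F y).det|) := by
    intro y h0
    have h1 : (‖G y * ((fderiv ℝ F y).det : ℂ)‖₊ : ℝ≥0∞)
        = (‖G y‖₊ : ℝ≥0∞) * ENNReal.ofReal |(fderiv ℝ F y).det| := by
      rw [nnnorm_mul]
      push_cast
      congr 1
      rw [← enorm_eq_nnnorm, ← ofReal_norm, Complex.norm_real, Real.norm_eq_abs]
    rw [h1, mul_assoc, hdet1 y h0, mul_one]
  -- the quantities D and A
  set D : Fin N → Euc d → ℝ≥0∞ :=
    fun j z => ENNReal.ofReal (1 / |(fderiv ℝ F (g j z)).det|) with hDdef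
  set Asup : ℝ≥0∞ := ⨆ x ∈ (F '' U') ∩ U, ∑' y : {y : Euc d // F y = x},
      ENNReal.ofReal (1 / |(fderiv ℝ F (y : Euc d)).det|) with hAsupdef
  have hregion : ∀ j, F '' S j ⊆ (F '' U') ∩ U := by
    rintro j z ⟨y, hy, rfl⟩
    have hyT := hGsupp (hStsupp j hy)
    exact ⟨⟨y, hyT.1, rfl⟩, hyT.2⟩
  have hAle : ∀ x : Euc d, (∑ j, Set.indicator (F '' S j) (D j) x)
      ≤ ∑' y : {y : Euc d // F y = x}, ENNReal.ofReal (1 / |(fderiv ℝ F (y : Euc d)).det|) := by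
    intro x
    have hrepr : ∀ j : Fin N, Set.indicator (F '' S j) (D j) x
        = ∑' y : {y : Euc d // F y = x},
            Set.indicator (S j) (fun y' => ENNReal.ofReal (1 / |(fderiv ℝ F y').det|))
              (y : Euc d) :=
      fun j => (fiber_tsum_eq_indicator F (hSV j) (hFinj j)
        (fun y' => ENNReal.ofReal (1 / |(fderiv ℝ F y').det|)) x).symm
    rw [Finset.sum_congr rfl fun j _ => hrepr j,
      ← Summable.tsum_finsetSum fun (j : Fin N) _ => ENNReal.summable]
    refine Summable.tsum_le_tsum (fun y => ?_) ENNReal.summable ENNReal.summable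
    by_cases hy : ∃ j : Fin N, (y : Euc d) ∈ S j
    · obtain ⟨j₀, hj₀⟩ := hy
      rw [Finset.sum_eq_single j₀
        (fun b _ hb => Set.indicator_of_notMem (fun hmem => hb (hSuniq hmem hj₀)) _)
        (fun habs => absurd (Finset.mem_univ j₀) habs),
        Set.indicator_of_mem hj₀]
    · rw [Finset.sum_eq_zero fun j _ => Set.indicator_of_notMem (fun hm => hy ⟨j, hm⟩) _]
      exact zero_le
  have hAsup : ∀ x : Euc d, x ∈ (F '' U') ∩ U →
      (∑ j, Set.indicator (F '' S j) (D j) x) ≤ Asup := by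
    intro x hx
    refine (hAle x).trans ?_
    exact le_biSup (f := fun x : Euc d => ∑' y : {y : Euc d // F y = x},
      ENNReal.ofReal (1 / |(fderiv ℝ F (y : Euc d)).det|)) hx
  -- pointwise bound on the norm of the transfer operator
  have hindnorm : ∀ (j : Fin N) (f : Euc d → ℂ) (x : Euc d),
      (‖Set.indicator (F '' S j) f x‖₊ : ℝ≥0∞)
        = Set.indicator (F '' S j) (fun z => (‖f z‖₊ : ℝ≥0∞)) x := by
    intro j f x
    by_cases hx : x ∈ F '' S j
    · rw [Set.indicator_of_mem hx, Set.indicator_of_mem hx]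
    · rw [Set.indicator_of_notMem hx, Set.indicator_of_notMem hx, nnnorm_zero,
        ENNReal.coe_zero]
  have hptbd : ∀ x : Euc d, (‖transferOp d F G u' x‖₊ : ℝ≥0∞)
      ≤ ∑ j, Set.indicator (F '' S j)
          (fun z => (‖G (g j z) * u' (g j z)‖₊ : ℝ≥0∞)) x := by
    intro x
    rw [hdecompC u' x]
    calc (‖∑ j, Set.indicator (F '' S j) (fun z => G (g j z) * u' (g j z)) x‖₊ : ℝ≥0∞)
        ≤ ∑ j, (‖Set.indicator (F '' S j) (fun z => G (g j z) * u' (g j z)) x‖₊ : ℝ≥0∞) := by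
          rw [← ENNReal.coe_finset_sum]
          exact_mod_cast nnnorm_sum_le _ _
      _ = ∑ j, Set.indicator (F '' S j)
            (fun z => (‖G (g j z) * u' (g j z)‖₊ : ℝ≥0∞)) x :=
          Finset.sum_congr rfl fun j _ => hindnorm j _ x
  have hterm : ∀ (j : Fin N) (x : Euc d),
      Set.indicator (F '' S j) (fun z => (‖G (g j z) * u' (g j z)‖₊ : ℝ≥0∞)) x
        ≤ M * Set.indicator (F '' S j) (fun z => D j z * (‖u' (g j z)‖₊ : ℝ≥0∞)) x := by
    intro j x
    by_cases hx : x ∈ F '' S j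
    · rw [Set.indicator_of_mem hx, Set.indicator_of_mem hx]
      obtain ⟨hyS, -⟩ := hgS j hx
      have h0 : (fderiv ℝ F (g j x)).det ≠ 0 := hFdet j _ (hSV j hyS)
      calc (‖G (g j x) * u' (g j x)‖₊ : ℝ≥0∞)
          = (‖G (g j x)‖₊ : ℝ≥0∞) * (‖u' (g j x)‖₊ : ℝ≥0∞) := by
            rw [nnnorm_mul]; push_cast; ring
        _ = (‖G (g j x) * ((fderiv ℝ F (g j x)).det : ℂ)‖₊ : ℝ≥0∞)
              * (D j x * (‖u' (g j x)‖₊ : ℝ≥0∞)) := by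
            rw [hGfac _ h0, hDdef, mul_assoc]
        _ ≤ M * (D j x * (‖u' (g j x)‖₊ : ℝ≥0∞)) :=
            mul_le_mul_left (hMbound _) _
    · rw [Set.indicator_of_notMem hx, Set.indicator_of_notMem hx, mul_zero]
  -- global bound for G
  have htsc : IsCompact (tsupport G) := hKunion ▸ isCompact_iUnion hKcomp
  obtain ⟨CG, hCGtop, hCG⟩ : ∃ CG : ℝ≥0∞, CG ≠ ∞ ∧ ∀ y : Euc d, (‖G y‖₊ : ℝ≥0∞) ≤ CG := by
    obtain ⟨C, hC⟩ := htsc.exists_bound_of_continuousOn hGcont.continuousOn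
    refine ⟨ENNReal.ofReal (max C 0), ENNReal.ofReal_ne_top, fun y => ?_⟩
    rw [← enorm_eq_nnnorm, ← ofReal_norm]
    refine ENNReal.ofReal_le_ofReal ?_
    by_cases hy : y ∈ tsupport G
    · exact (hC y hy).trans (le_max_left _ _)
    · rw [image_eq_zero_of_notMem_tsupport hy, norm_zero]
      exact le_max_right _ _
  by_cases hptop : p = ∞
  · -- the case p = ∞
    subst hptop
    set c : ℝ≥0∞ := eLpNormEssSup u' volume with hcdef
    have hcu : c = eLpNorm u ∞ volume := by
      rw [← heLpu', eLpNorm_exponent_top]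
    have hcfin : c < ∞ := by
      rw [hcu]; exact hu.eLpNorm_lt_top
    have haeu : ∀ᵐ x : Euc d, ∀ y : Euc d, F y = x → (‖u' y‖₊ : ℝ≥0∞) ≤ c :=
      haeLift ae_le_eLpNormEssSup
    have hbd : ∀ᵐ x : Euc d, (‖transferOp d F G u' x‖₊ : ℝ≥0∞) ≤ Asup * M * c := by
      filter_upwards [haeu] with x hx
      have hAx : (∑ j, Set.indicator (F '' S j) (D j) x) ≤ Asup := by
        by_cases hex : ∃ j : Fin N, x ∈ F '' S j
        · obtain ⟨j₀, hj₀⟩ := hex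
          exact hAsup x (hregion j₀ hj₀)
        · rw [Finset.sum_eq_zero fun j _ =>
            Set.indicator_of_notMem (fun hm => hex ⟨j, hm⟩) _]
          exact zero_le
      calc (‖transferOp d F G u' x‖₊ : ℝ≥0∞)
          ≤ ∑ j, Set.indicator (F '' S j)
              (fun z => (‖G (g j z) * u' (g j z)‖₊ : ℝ≥0∞)) x := hptbd x
        _ ≤ ∑ j, M * Set.indicator (F '' S j)
              (fun z => D j z * (‖u' (g j z)‖₊ : ℝ≥0∞)) x :=
            Finset.sum_le_sum fun j _ => hterm j x
        _ = M * ∑ j, Set.indicator (F '' S j)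
              (fun z => D j z * (‖u' (g j z)‖₊ : ℝ≥0∞)) x := by
            rw [Finset.mul_sum]
        _ ≤ M * ∑ j, Set.indicator (F '' S j) (D j) x * c := by
            refine mul_le_mul_right (Finset.sum_le_sum fun j _ => ?_) M
            by_cases hxj : x ∈ F '' S j
            · rw [Set.indicator_of_mem hxj, Set.indicator_of_mem hxj]
              exact mul_le_mul_right (hx _ (hgS j hxj).2) _
            · rw [Set.indicator_of_notMem hxj, Set.indicator_of_notMem hxj, zero_mul]
        _ = M * ((∑ j, Set.indicator (F '' S j) (D j) x) * c) := by
            rw [← Finset.sum_mul]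
        _ ≤ M * (Asup * c) := mul_le_mul_right (mul_le_mul_left hAx c) M
        _ = Asup * M * c := by ring
    have hLu'top : eLpNorm (transferOp d F G u') ∞ volume ≤ Asup * M * c := by
      rw [eLpNorm_exponent_top]
      exact essSup_le_of_ae_le _ hbd
    have halpha : alphaConst d F G ∞ U U' = Asup * M := by
      have h1 : (1 - (1/(∞:ℝ≥0∞)).toReal) = 1 := by simp
      rw [alphaConst, if_neg (by simp), h1, ENNReal.rpow_one, hAsupdef, hMdef]
    have hfinbd : ∀ᵐ x : Euc d,
        (‖transferOp d F G u' x‖₊ : ℝ≥0∞) ≤ (N : ℝ≥0∞) * (CG * c) := by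
      filter_upwards [haeu] with x hx
      refine (hptbd x).trans ?_
      calc ∑ j, Set.indicator (F '' S j)
            (fun z => (‖G (g j z) * u' (g j z)‖₊ : ℝ≥0∞)) x
          ≤ ∑ _j : Fin N, CG * c := by
            refine Finset.sum_le_sum fun j _ => ?_
            by_cases hxj : x ∈ F '' S j
            · rw [Set.indicator_of_mem hxj]
              have : (‖G (g j x) * u' (g j x)‖₊ : ℝ≥0∞)
                  = (‖G (g j x)‖₊ : ℝ≥0∞) * (‖u' (g j x)‖₊ : ℝ≥0∞) := by
                rw [nnnorm_mul]; push_cast; ring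
              rw [this]
              exact mul_le_mul' (hCG _) (hx _ (hgS j hxj).2)
            · rw [Set.indicator_of_notMem hxj]
              exact zero_le
        _ = (N : ℝ≥0∞) * (CG * c) := by
            rw [Finset.sum_const, Finset.card_univ, Fintype.card_fin, nsmul_eq_mul]
    have hLu'fin : eLpNorm (transferOp d F G u') ∞ volume < ∞ := by
      rw [eLpNorm_exponent_top]
      refine lt_of_le_of_lt (essSup_le_of_ae_le _ hfinbd) ?_
      exact ENNReal.mul_lt_top (by simp) (ENNReal.mul_lt_top hCGtop.lt_top hcfin)
    refine ⟨⟨hLuaesm, ?_⟩, ?_, hsuppLu⟩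
    · rw [eLpNorm_congr_ae hLuae]
      exact hLu'fin
    · rw [eLpNorm_congr_ae hLuae, halpha]
      calc eLpNorm (transferOp d F G u') ⊤ volume ≤ Asup * M * c := hLu'top
        _ = Asup * M * eLpNorm u ⊤ volume := by rw [hcu]
  · -- the case p finite
    have hprpos : 0 < p.toReal := ENNReal.toReal_pos hp0 hptop
    set pr : ℝ := p.toReal with hprdef
    have hpr1 : (1 : ℝ) ≤ pr := by
      have := ENNReal.toReal_mono hptop hp
      simpa using this
    have hprne : pr ≠ 0 := hprpos.ne'
    -- measurability of basic bricks
    have hmeas_u'pow : Measurable fun y : Euc d => (‖u' y‖₊ : ℝ≥0∞) ^ pr :=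
      ENNReal.continuous_rpow_const.measurable.comp
        (hu'm.measurable.nnnorm.coe_nnreal_ennreal)
    have hmeas_invdet : Measurable fun y : Euc d => ENNReal.ofReal (1 / |(fderiv ℝ F y).det|) := by
      apply ENNReal.measurable_ofReal.comp
      simp only [one_div]
      exact (hdetcont.abs.measurable).inv
    -- the quantity Φ
    set Φ : Euc d → ℝ≥0∞ := fun x => ∑ j, Set.indicator (F '' S j)
        (fun z => D j z * (‖u' (g j z)‖₊ : ℝ≥0∞) ^ pr) x with hΦdef
    have hΦtermmeas : ∀ j : Fin N, Measurable (Set.indicator (F '' S j)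
        (fun z => D j z * (‖u' (g j z)‖₊ : ℝ≥0∞) ^ pr)) := by
      intro j
      exact indicator_comp_invFunOn_measurable (hSmeas j) (hSV j) (hFinj j) hFdiff
        (fun y => ENNReal.ofReal (1 / |(fderiv ℝ F y).det|) * (‖u' y‖₊ : ℝ≥0∞) ^ pr)
        (hmeas_invdet.mul hmeas_u'pow)
    have hΦmeas : Measurable Φ := Finset.measurable_sum _ fun j _ => hΦtermmeas j
    -- Hölder inequality, pointwise in x
    have hhold : ∀ x : Euc d,
        (∑ j, Set.indicator (F '' S j) (fun z => D j z * (‖u' (g j z)‖₊ : ℝ≥0∞)) x) ^ pr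
          ≤ (∑ j, Set.indicator (F '' S j) (D j) x) ^ (pr - 1) * Φ x := by
      intro x
      set a : Fin N → ℝ≥0∞ := fun j => Set.indicator (F '' S j) (D j) x with hadef
      set b : Fin N → ℝ≥0∞ := fun j => (‖u' (g j x)‖₊ : ℝ≥0∞) with hbdef
      have hab1 : ∀ j : Fin N,
          Set.indicator (F '' S j) (fun z => D j z * (‖u' (g j z)‖₊ : ℝ≥0∞)) x = a j * b j := by
        intro j
        by_cases hxj : x ∈ F '' S j
        · rw [Set.indicator_of_mem hxj, hadef]
          simp only [Set.indicator_of_mem hxj]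
          rfl
        · rw [Set.indicator_of_notMem hxj, hadef]
          simp only [Set.indicator_of_notMem hxj, zero_mul]
      have hab2 : ∀ j : Fin N,
          Set.indicator (F '' S j) (fun z => D j z * (‖u' (g j z)‖₊ : ℝ≥0∞) ^ pr) x
            = a j * b j ^ pr := by
        intro j
        by_cases hxj : x ∈ F '' S j
        · rw [Set.indicator_of_mem hxj, hadef]
          simp only [Set.indicator_of_mem hxj]
          rfl
        · rw [Set.indicator_of_notMem hxj, hadef]
          simp only [Set.indicator_of_notMem hxj, zero_mul]
      have hΦx : Φ x = ∑ j : Fin N, a j * b j ^ pr :=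
        Finset.sum_congr rfl fun j _ => hab2 j
      rw [Finset.sum_congr rfl fun j _ => hab1 j, hΦx]
      rcases eq_or_lt_of_le hpr1 with heq | hlt
      · rw [← heq]
        simp only [ENNReal.rpow_one, sub_self, ENNReal.rpow_zero, one_mul]
        exact le_rfl
      · set q : ℝ := pr / (pr - 1) with hqdef
        have hpq : pr.HolderConjugate q := Real.HolderConjugate.conjExponent hlt
        have hq0 : q ≠ 0 := hpq.symm.ne_zero
        have hinvsum : 1 / q + 1 / pr = 1 := by
          rw [add_comm, one_div, one_div]
          exact hpq.inv_add_inv_eq_one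
        have hsplit : ∀ j : Fin N, a j * b j = a j ^ (1 / q) * (a j ^ (1 / pr) * b j) := by
          intro j
          rw [← mul_assoc, ← ENNReal.rpow_add_of_nonneg _ _ (le_of_lt hpq.symm.one_div_pos)
            (le_of_lt hpq.one_div_pos), hinvsum, ENNReal.rpow_one]
        have hHolder := ENNReal.inner_le_Lp_mul_Lq (s := Finset.univ)
          (fun j => a j ^ (1 / q)) (fun j => a j ^ (1 / pr) * b j) hpq.symm
        have h1 : ∀ j : Fin N, (a j ^ (1 / q)) ^ q = a j := by
          intro j
          rw [← ENNReal.rpow_mul, one_div_mul_cancel hq0, ENNReal.rpow_one]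
        have h2 : ∀ j : Fin N, (a j ^ (1 / pr) * b j) ^ pr = a j * b j ^ pr := by
          intro j
          rw [ENNReal.mul_rpow_of_nonneg _ _ (le_of_lt hprpos), ← ENNReal.rpow_mul,
            one_div_mul_cancel hprne, ENNReal.rpow_one]
        rw [Finset.sum_congr rfl fun j _ => h1 j, Finset.sum_congr rfl fun j _ => h2 j] at hHolder
        have hstep : ∑ j : Fin N, a j * b j
            ≤ (∑ j : Fin N, a j) ^ (1 / q) * (∑ j : Fin N, a j * b j ^ pr) ^ (1 / pr) := by
          calc ∑ j : Fin N, a j * b j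
              = ∑ j : Fin N, a j ^ (1 / q) * (a j ^ (1 / pr) * b j) :=
                Finset.sum_congr rfl fun j _ => hsplit j
            _ ≤ (∑ j : Fin N, a j) ^ (1 / q) * (∑ j : Fin N, a j * b j ^ pr) ^ (1 / pr) := hHolder
        calc (∑ j : Fin N, a j * b j) ^ pr
            ≤ ((∑ j : Fin N, a j) ^ (1 / q) * (∑ j : Fin N, a j * b j ^ pr) ^ (1 / pr)) ^ pr :=
              ENNReal.rpow_le_rpow hstep (le_of_lt hprpos)
          _ = (∑ j : Fin N, a j) ^ (pr - 1) * ∑ j : Fin N, a j * b j ^ pr := by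
              have hqexp : 1 / q * pr = pr - 1 := by
                rw [hqdef]
                field_simp
              rw [ENNReal.mul_rpow_of_nonneg _ _ (le_of_lt hprpos), ← ENNReal.rpow_mul,
                hqexp, ← ENNReal.rpow_mul, one_div_mul_cancel hprne, ENNReal.rpow_one]
    -- the key pointwise bound
    have hkey : ∀ x : Euc d,
        (‖transferOp d F G u' x‖₊ : ℝ≥0∞) ^ pr ≤ M ^ pr * Asup ^ (pr - 1) * Φ x := by
      intro x
      by_cases hex : ∃ j : Fin N, x ∈ F '' S j
      · have h1 : (‖transferOp d F G u' x‖₊ : ℝ≥0∞)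
            ≤ M * ∑ j, Set.indicator (F '' S j)
                (fun z => D j z * (‖u' (g j z)‖₊ : ℝ≥0∞)) x := by
          refine (hptbd x).trans ?_
          rw [Finset.mul_sum]
          exact Finset.sum_le_sum fun j _ => hterm j x
        calc (‖transferOp d F G u' x‖₊ : ℝ≥0∞) ^ pr
            ≤ (M * ∑ j, Set.indicator (F '' S j)
                (fun z => D j z * (‖u' (g j z)‖₊ : ℝ≥0∞)) x) ^ pr :=
              ENNReal.rpow_le_rpow h1 (le_of_lt hprpos)
          _ = M ^ pr * (∑ j, Set.indicator (F '' S j)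
                (fun z => D j z * (‖u' (g j z)‖₊ : ℝ≥0∞)) x) ^ pr :=
              ENNReal.mul_rpow_of_nonneg _ _ (le_of_lt hprpos)
          _ ≤ M ^ pr * ((∑ j, Set.indicator (F '' S j) (D j) x) ^ (pr - 1) * Φ x) :=
              mul_le_mul_right (hhold x) _
          _ ≤ M ^ pr * (Asup ^ (pr - 1) * Φ x) := by
              obtain ⟨j₀, hj₀⟩ := hex
              exact mul_le_mul_right (mul_le_mul_left
                (ENNReal.rpow_le_rpow (hAsup x (hregion j₀ hj₀)) (by linarith)) _) _
          _ = M ^ pr * Asup ^ (pr - 1) * Φ x := by ring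
      · have h0 : transferOp d F G u' x = 0 := by
          rw [hdecompC u' x]
          exact Finset.sum_eq_zero fun j _ =>
            Set.indicator_of_notMem (fun hm => hex ⟨j, hm⟩) _
        rw [h0]
        simp only [nnnorm_zero, ENNReal.coe_zero]
        rw [ENNReal.zero_rpow_of_pos hprpos]
        exact zero_le
    -- integrating the bound
    set J : ℝ≥0∞ := ∫⁻ y, (‖u' y‖₊ : ℝ≥0∞) ^ pr with hJdef
    have hΦint : ∫⁻ x, Φ x ≤ J := by
      calc ∫⁻ x, Φ x
          = ∑ j, ∫⁻ x, Set.indicator (F '' S j)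
              (fun z => D j z * (‖u' (g j z)‖₊ : ℝ≥0∞) ^ pr) x :=
            lintegral_finset_sum _ fun j _ => hΦtermmeas j
        _ = ∑ j, ∫⁻ y in S j, (‖u' y‖₊ : ℝ≥0∞) ^ pr := by
            refine Finset.sum_congr rfl fun j _ => ?_
            rw [hCOV j (fun y => ENNReal.ofReal (1 / |(fderiv ℝ F y).det|)
              * (‖u' y‖₊ : ℝ≥0∞) ^ pr)]
            refine setLIntegral_congr_fun (hSmeas j) (fun y hy => ?_)
            rw [← mul_assoc, hdet1 y (hFdet j y (hSV j hy)), one_mul]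
        _ = ∑ j, ∫⁻ y, Set.indicator (S j) (fun y => (‖u' y‖₊ : ℝ≥0∞) ^ pr) y :=
            Finset.sum_congr rfl fun j _ => (lintegral_indicator (hSmeas j) _).symm
        _ = ∫⁻ y, ∑ j, Set.indicator (S j) (fun y => (‖u' y‖₊ : ℝ≥0∞) ^ pr) y :=
            (lintegral_finset_sum _ fun j _ => hmeas_u'pow.indicator (hSmeas j)).symm
        _ ≤ J := by
            refine lintegral_mono fun y => ?_
            by_cases hy : ∃ j : Fin N, y ∈ S j
            · obtain ⟨j₀, hj₀⟩ := hy
              rw [Finset.sum_eq_single j₀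
                (fun b _ hb => Set.indicator_of_notMem (fun hm => hb (hSuniq hm hj₀)) _)
                (fun habs => absurd (Finset.mem_univ j₀) habs),
                Set.indicator_of_mem hj₀]
            · rw [Finset.sum_eq_zero fun j _ =>
                Set.indicator_of_notMem (fun hm => hy ⟨j, hm⟩) _]
              exact zero_le
    have hInt : ∫⁻ x, (‖transferOp d F G u' x‖₊ : ℝ≥0∞) ^ pr
        ≤ M ^ pr * Asup ^ (pr - 1) * J := by
      calc ∫⁻ x, (‖transferOp d F G u' x‖₊ : ℝ≥0∞) ^ pr
          ≤ ∫⁻ x, M ^ pr * Asup ^ (pr - 1) * Φ x := lintegral_mono hkey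
        _ = M ^ pr * Asup ^ (pr - 1) * ∫⁻ x, Φ x := lintegral_const_mul _ hΦmeas
        _ ≤ M ^ pr * Asup ^ (pr - 1) * J := mul_le_mul_right hΦint _
    -- the norm bound
    have hJnorm : eLpNorm u p volume = J ^ (1 / pr) := by
      rw [← heLpu', eLpNorm_eq_lintegral_rpow_enorm_toReal hp0 hptop]
      rfl
    have heLp : eLpNorm (transferOp d F G u') p volume
        ≤ M * Asup ^ ((pr - 1) / pr) * eLpNorm u p volume := by
      rw [eLpNorm_eq_lintegral_rpow_enorm_toReal hp0 hptop]
      calc (∫⁻ x, (‖transferOp d F G u' x‖₊ : ℝ≥0∞) ^ pr) ^ (1 / pr)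
          ≤ (M ^ pr * Asup ^ (pr - 1) * J) ^ (1 / pr) :=
            ENNReal.rpow_le_rpow hInt (by positivity)
        _ = M * Asup ^ ((pr - 1) / pr) * J ^ (1 / pr) := by
            rw [ENNReal.mul_rpow_of_nonneg _ _ (by positivity),
              ENNReal.mul_rpow_of_nonneg _ _ (by positivity),
              ← ENNReal.rpow_mul, ← ENNReal.rpow_mul, mul_one_div_cancel hprne,
              ENNReal.rpow_one, mul_one_div]
        _ = M * Asup ^ ((pr - 1) / pr) * eLpNorm u p volume := by rw [hJnorm]
    have halpha : alphaConst d F G p U U' = Asup ^ ((pr - 1) / pr) * M := by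
      by_cases hp1 : p = 1
      · have hpr1' : pr = 1 := by rw [hprdef, hp1, ENNReal.toReal_one]
        rw [alphaConst, if_pos hp1, ← hMdef, hpr1']
        norm_num
      · rw [alphaConst, if_neg hp1, ← hMdef, ← hAsupdef]
        congr 2
        rw [one_div, ENNReal.toReal_inv, ← hprdef]
        field_simp
    refine ⟨?_, ?_, hsuppLu⟩
    · -- membership in L^p
      refine ⟨hLuaesm, ?_⟩
      rw [eLpNorm_congr_ae hLuae]
      have hJfin : J ≠ ∞ := by
        have hJeq : J = (eLpNorm u' p volume) ^ pr := by
          rw [eLpNorm_eq_lintegral_rpow_enorm_toReal hp0 hptop, ← ENNReal.rpow_mul,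
            one_div_mul_cancel hprne, ENNReal.rpow_one]
          rfl
        rw [hJeq]
        exact ENNReal.rpow_ne_top_of_nonneg (le_of_lt hprpos)
          (by rw [heLpu']; exact hu.eLpNorm_ne_top)
      have hejmeas : ∀ j : Fin N,
          Measurable (Set.indicator (F '' S j) (fun z => G (g j z) * u' (g j z))) :=
        fun j => indicator_comp_invFunOn_measurable (hSmeas j) (hSV j) (hFinj j) hFdiff
          (fun y => G y * u' y) (hGcont.measurable.mul hu'm.measurable)
      have hjfin : ∀ j : Fin N, eLpNorm
          (Set.indicator (F '' S j) (fun z => G (g j z) * u' (g j z))) p volume < ∞ := by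
        intro j
        obtain ⟨Cd, hCd⟩ := (hKcomp j).exists_bound_of_continuousOn hdetcont.continuousOn
        set Cj : ℝ≥0∞ := ENNReal.ofReal Cd * CG ^ pr with hCjdef
        have hCjtop : Cj ≠ ∞ := ENNReal.mul_ne_top ENNReal.ofReal_ne_top
          (ENNReal.rpow_ne_top_of_nonneg (le_of_lt hprpos) hCGtop)
        have hptw : ∀ z : Euc d,
            (‖Set.indicator (F '' S j) (fun z => G (g j z) * u' (g j z)) z‖₊ : ℝ≥0∞) ^ pr
              = Set.indicator (F '' S j)
                  (fun z => (‖G (g j z) * u' (g j z)‖₊ : ℝ≥0∞) ^ pr) z := by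
          intro z
          by_cases hz : z ∈ F '' S j
          · rw [Set.indicator_of_mem hz, Set.indicator_of_mem hz]
          · rw [Set.indicator_of_notMem hz, Set.indicator_of_notMem hz, nnnorm_zero,
              ENNReal.coe_zero, ENNReal.zero_rpow_of_pos hprpos]
        have hint : ∫⁻ z, (‖Set.indicator (F '' S j)
            (fun z => G (g j z) * u' (g j z)) z‖₊ : ℝ≥0∞) ^ pr ≤ Cj * J := by
          calc ∫⁻ z, (‖Set.indicator (F '' S j)
                (fun z => G (g j z) * u' (g j z)) z‖₊ : ℝ≥0∞) ^ pr
              = ∫⁻ z, Set.indicator (F '' S j)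
                  (fun z => (‖G (g j z) * u' (g j z)‖₊ : ℝ≥0∞) ^ pr) z :=
                lintegral_congr hptw
            _ = ∫⁻ y in S j, ENNReal.ofReal |(fderiv ℝ F y).det|
                  * (‖G y * u' y‖₊ : ℝ≥0∞) ^ pr :=
                hCOV j (fun y => (‖G y * u' y‖₊ : ℝ≥0∞) ^ pr)
            _ ≤ ∫⁻ y in S j, Cj * (‖u' y‖₊ : ℝ≥0∞) ^ pr := by
                refine setLIntegral_mono (measurable_const.mul hmeas_u'pow) fun y hy => ?_
                have h1 : ENNReal.ofReal |(fderiv ℝ F y).det| ≤ ENNReal.ofReal Cd := by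
                  refine ENNReal.ofReal_le_ofReal ?_
                  have := hCd y (hSK j hy)
                  rwa [Real.norm_eq_abs] at this
                have h2 : (‖G y * u' y‖₊ : ℝ≥0∞) ^ pr
                    ≤ CG ^ pr * (‖u' y‖₊ : ℝ≥0∞) ^ pr := by
                  rw [← ENNReal.mul_rpow_of_nonneg _ _ (le_of_lt hprpos)]
                  refine ENNReal.rpow_le_rpow ?_ (le_of_lt hprpos)
                  have : (‖G y * u' y‖₊ : ℝ≥0∞) = (‖G y‖₊ : ℝ≥0∞) * (‖u' y‖₊ : ℝ≥0∞) := by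
                    rw [nnnorm_mul]; push_cast; ring
                  rw [this]
                  exact mul_le_mul_left (hCG y) _
                calc ENNReal.ofReal |(fderiv ℝ F y).det| * (‖G y * u' y‖₊ : ℝ≥0∞) ^ pr
                    ≤ ENNReal.ofReal Cd * (CG ^ pr * (‖u' y‖₊ : ℝ≥0∞) ^ pr) :=
                      mul_le_mul' h1 h2
                  _ = Cj * (‖u' y‖₊ : ℝ≥0∞) ^ pr := by rw [hCjdef, mul_assoc]
            _ = Cj * ∫⁻ y in S j, (‖u' y‖₊ : ℝ≥0∞) ^ pr :=
                lintegral_const_mul _ hmeas_u'pow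
            _ ≤ Cj * J := mul_le_mul_right (setLIntegral_le_lintegral _ _) _
        rw [eLpNorm_eq_lintegral_rpow_enorm_toReal hp0 hptop]
        calc (∫⁻ z, (‖Set.indicator (F '' S j)
              (fun z => G (g j z) * u' (g j z)) z‖₊ : ℝ≥0∞) ^ pr) ^ (1 / pr)
            ≤ (Cj * J) ^ (1 / pr) := ENNReal.rpow_le_rpow hint (by positivity)
          _ < ∞ := ENNReal.rpow_lt_top_of_nonneg (by positivity)
              (ENNReal.mul_ne_top hCjtop hJfin)
      have hLu'eq : transferOp d F G u'
          = ∑ j : Fin N, Set.indicator (F '' S j) (fun z => G (g j z) * u' (g j z)) := by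
        funext x
        rw [hdecompC u' x, Finset.sum_apply]
      rw [hLu'eq]
      refine lt_of_le_of_lt (eLpNorm_sum_le
        (fun j _ => (hejmeas j).aestronglyMeasurable) hp) ?_
      exact ENNReal.sum_lt_top.2 fun j _ => hjfin j
    · -- the norm inequality
      rw [eLpNorm_congr_ae hLuae, halpha]
      calc eLpNorm (transferOp d F G u') p volume
          ≤ M * Asup ^ ((pr - 1) / pr) * eLpNorm u p volume := heLp
        _ = Asup ^ ((pr - 1) / pr) * M * eLpNorm u p volume := by ring

end
end

section
/- Let c̃ > 0, let T: ℝ^d → ℝ^d be a map with |T(x) − T(y)| ≥ c̃|x − y| for all x, y ∈ ℝ^d, and let K ⊂ ℝ^d be a compact set. Then there exists a constant C > 0, depending only on d, c̃ and K, such that for all integers n ≥ ℓ ≥ 0 and all x, y ∈ ℝ^d: 2^{dn}·∫_K b(2^n(x − w))·b(2^ℓ(T(w) − T(y))) dw ≤ C·b(2^ℓ(x − y)). -/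
open MeasureTheory Filter Set
open scoped ENNReal Topology

noncomputable section

/-- b(x) = 1 for |x| ≤ 1 and |x|^{−d−1} for |x| > 1. -/
def bFun (d : ℕ) (x : Euc d) : ℝ :=
  if ‖x‖ ≤ 1 then 1 else ‖x‖ ^ (-(d : ℝ) - 1)

/-! ### Auxiliary lemmas -/

/-- The radial profile of `bFun`. -/
def bR (d : ℕ) (r : ℝ) : ℝ := if r ≤ 1 then 1 else r ^ (-(d:ℝ) - 1)

lemma bFun_eq_bR (d : ℕ) (x : Euc d) : bFun d x = bR d ‖x‖ := rfl

lemma bR_pos (d : ℕ) (r : ℝ) : 0 < bR d r := by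
  unfold bR; split
  · exact one_pos
  · exact Real.rpow_pos_of_pos (lt_of_le_of_lt zero_le_one (not_le.1 (by assumption))) _

lemma sexp_nonpos (d : ℕ) : -(d:ℝ) - 1 ≤ 0 := by
  have := Nat.cast_nonneg (α := ℝ) d; linarith

lemma bR_le_one (d : ℕ) (r : ℝ) : bR d r ≤ 1 := by
  unfold bR; split
  · exact le_refl _
  · exact Real.rpow_le_one_of_one_le_of_nonpos (not_le.1 (by assumption)).le (sexp_nonpos d)

lemma bR_anti (d : ℕ) {r₁ r₂ : ℝ} (h : r₁ ≤ r₂) : bR d r₂ ≤ bR d r₁ := by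
  unfold bR
  split_ifs with h2 h1 h1
  · exact le_refl _
  · exact absurd (h.trans h2) h1
  · exact Real.rpow_le_one_of_one_le_of_nonpos (not_le.1 h2).le (sexp_nonpos d)
  · exact Real.rpow_le_rpow_of_nonpos (lt_trans one_pos (not_le.1 h1)) h (sexp_nonpos d)

lemma bR_eq (d : ℕ) {r : ℝ} (h : 1 < r) : bR d r = r ^ (-(d:ℝ) - 1) := if_neg (not_le.2 h)

lemma bFun_nonneg (d : ℕ) (x : Euc d) : 0 ≤ bFun d x := by
  rw [bFun_eq_bR]; exact (bR_pos d _).le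

lemma bFun_le_one (d : ℕ) (x : Euc d) : 1 ≥ bFun d x := by
  rw [bFun_eq_bR]; exact bR_le_one d _

lemma measurable_bFun (d : ℕ) : Measurable (bFun d) := by
  unfold bFun
  exact Measurable.ite (measurableSet_le measurable_norm measurable_const)
    measurable_const (by fun_prop)

lemma bFun_norm_smul (d : ℕ) {a : ℝ} (ha : 0 ≤ a) (v : Euc d) :
    bFun d (a • v) = bR d (a * ‖v‖) := by
  rw [bFun_eq_bR, norm_smul, Real.norm_of_nonneg ha]

open Module in
lemma integrable_bFun (d : ℕ) : Integrable (bFun d) := by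
  have hnr : (finrank ℝ (Euc d) : ℝ) < (d:ℝ) + 1 := by
    rw [finrank_euclideanSpace_fin]; linarith
  have hint := (integrable_one_add_norm (E := Euc d) (μ := volume) hnr).const_mul
    ((2:ℝ) ^ ((d:ℝ) + 1))
  refine hint.mono' (measurable_bFun d).aestronglyMeasurable (Eventually.of_forall fun x => ?_)
  have hxn : (0:ℝ) ≤ ‖x‖ := norm_nonneg x
  have hsneg : -((d:ℝ)+1) ≤ 0 := by have := Nat.cast_nonneg (α := ℝ) d; linarith
  rw [Real.norm_of_nonneg (bFun_nonneg d x)]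
  have hrw : -(d:ℝ) - 1 = -((d:ℝ)+1) := by ring
  unfold bFun
  rw [hrw]
  set s : ℝ := (d:ℝ) + 1 with hs
  have h2s : (0:ℝ) < 2 ^ s := Real.rpow_pos_of_pos two_pos _
  have hcanc : (2:ℝ) ^ s * 2 ^ (-s) = 1 := by
    rw [← Real.rpow_add two_pos]; simp
  split_ifs with h
  · have h2 : (1:ℝ) + ‖x‖ ≤ 2 := by linarith
    have h3 := Real.rpow_le_rpow_of_nonpos (by linarith : (0:ℝ) < 1 + ‖x‖) h2 hsneg
    calc (1:ℝ) = 2 ^ s * 2 ^ (-s) := hcanc.symm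
      _ ≤ 2 ^ s * (1 + ‖x‖) ^ (-s) := mul_le_mul_of_nonneg_left h3 h2s.le
  · have h1 : (1:ℝ) < ‖x‖ := not_le.1 h
    have h2 : (1:ℝ) + ‖x‖ ≤ 2 * ‖x‖ := by linarith
    have h3 := Real.rpow_le_rpow_of_nonpos (by linarith : (0:ℝ) < 1 + ‖x‖) h2 hsneg
    rw [Real.mul_rpow (by norm_num) hxn] at h3
    calc ‖x‖ ^ (-s) = 2 ^ s * (2 ^ (-s) * ‖x‖ ^ (-s)) := by
          rw [← mul_assoc, hcanc, one_mul]
      _ ≤ 2 ^ s * (1 + ‖x‖) ^ (-s) := mul_le_mul_of_nonneg_left h3 h2s.le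

lemma bFun_neg (d : ℕ) (v : Euc d) : bFun d (-v) = bFun d v := by
  unfold bFun; rw [norm_neg]

open Module in
lemma bFun_shift (d : ℕ) {a : ℝ} (ha : 0 < a) (c : Euc d) :
    Integrable (fun w : Euc d => bFun d (a • (w - c))) ∧
      ∫ w : Euc d, bFun d (a • (w - c)) = ((a ^ d)⁻¹) * ∫ z : Euc d, bFun d z := by
  have h1 : Integrable (fun z : Euc d => bFun d (a • z)) :=
    (integrable_bFun d).comp_smul (ne_of_gt ha)
  refine ⟨h1.comp_sub_right c, ?_⟩
  rw [integral_sub_right_eq_self (fun z : Euc d => bFun d (a • z)) c]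
  rw [MeasureTheory.Measure.integral_comp_smul volume (bFun d) a]
  rw [finrank_euclideanSpace_fin, smul_eq_mul, abs_of_nonneg (by positivity)]

open Module in
lemma bFun_shift' (d : ℕ) {a : ℝ} (ha : 0 < a) (c : Euc d) :
    Integrable (fun w : Euc d => bFun d (a • (c - w))) ∧
      ∫ w : Euc d, bFun d (a • (c - w)) = ((a ^ d)⁻¹) * ∫ z : Euc d, bFun d z := by
  have he : ∀ w : Euc d, bFun d (a • (c - w)) = bFun d (a • (w - c)) := fun w => by
    rw [show a • (c - w) = -(a • (w - c)) by rw [← smul_neg, neg_sub], bFun_neg]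
  simp only [he]
  exact bFun_shift d ha c

set_option maxHeartbeats 1000000 in
/-- for an expanding-at-rate-c̃ map T and a compact K, there is C > 0
depending only on d, c̃ and K with
2^{dn}·∫_K b(2^n(x−w))·b(2^ℓ(Tw−Ty)) dw ≤ C·b(2^ℓ(x−y)) for all n ≥ ℓ ≥ 0 and x, y. -/
theorem convolution_kernel_estimate
    (d : ℕ) (hd : 1 ≤ d) (ctil : ℝ) (hctil : 0 < ctil)
    (K : Set (Euc d)) (hK : IsCompact K) :
    ∃ C > (0:ℝ), ∀ T : Euc d → Euc d,
      (∀ x y : Euc d, ctil * ‖x - y‖ ≤ ‖T x - T y‖) →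
      ∀ n ℓ : ℕ, ℓ ≤ n → ∀ x y : Euc d,
        (2:ℝ) ^ (d * n) *
            ∫ w in K, bFun d ((2:ℝ) ^ n • (x - w)) * bFun d ((2:ℝ) ^ ℓ • (T w - T y))
          ≤ C * bFun d ((2:ℝ) ^ ℓ • (x - y)) := by
  classical
  set A : ℝ := ∫ z : Euc d, bFun d z with hA
  have hA0 : 0 ≤ A := integral_nonneg fun z => bFun_nonneg d z
  set s : ℝ := (d:ℝ) + 1 with hs
  have hs0 : (0:ℝ) < s := by rw [hs]; positivity
  have hse : -(d:ℝ) - 1 = -s := by rw [hs]; ring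
  have hM2 : (0:ℝ) < max 2 (2/ctil) := lt_of_lt_of_le two_pos (le_max_left _ _)
  set M₁ : ℝ := (max 2 (2/ctil)) ^ s with hM₁
  have hM₁0 : 0 < M₁ := Real.rpow_pos_of_pos hM2 _
  have h2s0 : (0:ℝ) < (2:ℝ) ^ s := Real.rpow_pos_of_pos two_pos _
  have hcd0 : (0:ℝ) < (ctil⁻¹) ^ d := by positivity
  set C : ℝ := (A + 1) * (2^s + M₁ + 2^s * (ctil⁻¹)^d + 1) with hC
  have hC0 : 0 < C := by
    have h1 : (0:ℝ) < A + 1 := by linarith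
    have h2 : (0:ℝ) < 2^s + M₁ + 2^s * (ctil⁻¹)^d + 1 := by positivity
    exact mul_pos h1 h2
  -- a key scalar estimate
  have hkey : ∀ u : ℝ, 1 < u → bR d ((ctil/2) * u) ≤ M₁ * bR d u := by
    intro u hu
    have hu0 : (0:ℝ) < u := lt_trans one_pos hu
    rw [bR_eq d hu, hse]
    by_cases hc : (ctil/2) * u ≤ 1
    · rw [bR, if_pos hc]
      have htc : u ≤ 2/ctil := by
        rw [le_div_iff₀ hctil]
        nlinarith
      have h1 : u ≤ max 2 (2/ctil) := le_trans htc (le_max_right _ _)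
      have h2 : u ^ s ≤ M₁ := by
        rw [hM₁]; exact Real.rpow_le_rpow hu0.le h1 hs0.le
      have h3 : (0:ℝ) < u ^ s := Real.rpow_pos_of_pos hu0 _
      rw [Real.rpow_neg hu0.le, ← div_eq_mul_inv]
      rw [le_div_iff₀ h3, one_mul]
      exact h2
    · rw [bR, if_neg hc, hse]
      have h0 : (0:ℝ) < ctil/2 := by positivity
      rw [Real.mul_rpow h0.le hu0.le]
      have h1 : (ctil/2) ^ (-s) ≤ M₁ := by
        rw [Real.rpow_neg h0.le, ← Real.inv_rpow h0.le, inv_div, hM₁]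
        exact Real.rpow_le_rpow (by positivity) (le_max_right _ _) hs0.le
      exact mul_le_mul_of_nonneg_right h1 (Real.rpow_nonneg hu0.le _)
  refine ⟨C, hC0, ?_⟩
  intro T hT n ℓ hℓn x y
  have hpn : (0:ℝ) < 2 ^ n := by positivity
  have hpl : (0:ℝ) < 2 ^ ℓ := by positivity
  set B : ℝ := bFun d ((2:ℝ)^ℓ • (x - y)) with hBdef
  have hB0 : 0 < B := by rw [hBdef, bFun_eq_bR]; exact bR_pos d _
  set f : Euc d → ℝ :=
    fun w => bFun d ((2:ℝ)^n • (x - w)) * bFun d ((2:ℝ)^ℓ • (T w - T y)) with hfdef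
  by_cases hfi : IntegrableOn f K volume
  swap
  · rw [integral_undef hfi, mul_zero]
    exact (mul_pos hC0 hB0).le
  have hI1 := bFun_shift' d hpn x
  have hInt1 : Integrable (fun w : Euc d => bFun d ((2:ℝ)^n • (x - w))) := hI1.1
  have hval1 := hI1.2
  have hcancel : (2:ℝ)^(d*n) * (((2:ℝ)^n)^d)⁻¹ = 1 := by
    rw [← pow_mul, mul_comm n d, mul_inv_cancel₀ (pow_ne_zero _ two_ne_zero)]
  set t : ℝ := 2^ℓ * ‖x - y‖ with htdef
  have ht0 : (0:ℝ) ≤ t := by rw [htdef]; positivity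
  have hBt : B = bR d t := by rw [hBdef, bFun_norm_smul d hpl.le]
  by_cases ht : t ≤ 2
  · -- small case
    have hmono : ∫ w in K, f w ≤ ∫ w in K, bFun d ((2:ℝ)^n • (x - w)) := by
      refine setIntegral_mono_on hfi hInt1.integrableOn hK.measurableSet (fun w _ => ?_)
      simp only [hfdef]
      calc bFun d ((2:ℝ)^n • (x-w)) * bFun d ((2:ℝ)^ℓ • (T w - T y))
          ≤ bFun d ((2:ℝ)^n • (x-w)) * 1 :=
            mul_le_mul_of_nonneg_left (bFun_le_one d _) (bFun_nonneg d _)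
        _ = bFun d ((2:ℝ)^n • (x-w)) := mul_one _
    have hle2 : ∫ w in K, bFun d ((2:ℝ)^n • (x - w)) ≤ (((2:ℝ)^n)^d)⁻¹ * A :=
      le_of_le_of_eq (setIntegral_le_integral hInt1
        (ae_of_all _ fun w => bFun_nonneg d _)) hval1
    have hBlow : (2:ℝ)^(-s) ≤ B := by
      rw [hBt]
      have h1 : bR d 2 ≤ bR d t := bR_anti d ht
      have h2 : bR d 2 = (2:ℝ)^(-s) := by rw [bR_eq d one_lt_two, hse]
      linarith
    have hchain : (2:ℝ)^(d*n) * ∫ w in K, f w ≤ A := by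
      calc (2:ℝ)^(d*n) * ∫ w in K, f w
          ≤ (2:ℝ)^(d*n) * ((((2:ℝ)^n)^d)⁻¹ * A) :=
            mul_le_mul_of_nonneg_left (hmono.trans hle2) (by positivity)
        _ = ((2:ℝ)^(d*n) * (((2:ℝ)^n)^d)⁻¹) * A := by ring
        _ = A := by rw [hcancel, one_mul]
    have hfinal : A ≤ C * B := by
      have h1 : 1 ≤ 2^s * B := by
        have h4 := mul_le_mul_of_nonneg_left hBlow h2s0.le
        have hc : (2:ℝ)^s * 2^(-s) = 1 := by rw [← Real.rpow_add two_pos]; simp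
        linarith
      have h3 : (A+1) ≤ (A+1) * (2^s*B) := le_mul_of_one_le_right (by linarith) h1
      have h5 : (0:ℝ) ≤ (A+1) * ((M₁ + 2^s*(ctil⁻¹)^d + 1)*B) := by
        have : (0:ℝ) ≤ M₁ + 2^s*(ctil⁻¹)^d + 1 := by positivity
        have := mul_nonneg this hB0.le
        exact mul_nonneg (by linarith) this
      have h2 : C * B = (A+1) * (2^s*B) + (A+1)*((M₁ + 2^s*(ctil⁻¹)^d + 1)*B) := by
        rw [hC]; ring
      linarith
    linarith
  · push_neg at ht
    set m : ℕ := n - ℓ with hm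
    have hnm : n = m + ℓ := (Nat.sub_add_cancel hℓn).symm
    set pm : ℝ := 2^m with hpm
    have hpm1 : (1:ℝ) ≤ pm := by rw [hpm]; exact one_le_pow₀ one_le_two
    have hpm0 : (0:ℝ) < pm := by rw [hpm]; positivity
    have hca : (0:ℝ) < ctil * 2^ℓ := by positivity
    have hI2 := bFun_shift d hca y
    set D : ℝ := 2^s * pm^(-s) * B with hD
    have hD0 : (0:ℝ) ≤ D := by
      rw [hD]
      exact mul_nonneg (mul_nonneg h2s0.le (Real.rpow_nonneg hpm0.le _)) hB0.le
    set g : Euc d → ℝ := fun w =>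
      M₁ * B * bFun d ((2:ℝ)^n • (x - w)) + D * bFun d ((ctil * 2^ℓ) • (w - y)) with hg
    have hgInt : Integrable g := (hInt1.const_mul _).add (hI2.1.const_mul _)
    have hpw : ∀ w, f w ≤ g w := by
      intro w
      have e1 : bFun d ((2:ℝ)^n • (x - w)) = bR d (2^n * ‖x - w‖) := bFun_norm_smul d hpn.le _
      have e2 : bFun d ((2:ℝ)^ℓ • (T w - T y)) = bR d (2^ℓ * ‖T w - T y‖) :=
        bFun_norm_smul d hpl.le _
      have e3 : bFun d ((ctil * 2^ℓ) • (w - y)) = bR d (ctil * 2^ℓ * ‖w - y‖) :=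
        bFun_norm_smul d hca.le _
      have hT' := hT w y
      have hTb : bR d (2^ℓ * ‖T w - T y‖) ≤ bR d (ctil * 2^ℓ * ‖w - y‖) := by
        apply bR_anti
        calc ctil * 2^ℓ * ‖w-y‖ = 2^ℓ * (ctil * ‖w-y‖) := by ring
          _ ≤ 2^ℓ * ‖T w - T y‖ := mul_le_mul_of_nonneg_left hT' hpl.le
      have htri : ‖x - y‖ ≤ ‖x - w‖ + ‖w - y‖ := by
        have h := dist_triangle x w y
        rwa [dist_eq_norm, dist_eq_norm, dist_eq_norm] at h
      by_cases hw : ‖x - w‖ ≤ ‖x - y‖ / 2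
      · -- near region
        have h5 : ‖x - y‖/2 ≤ ‖w - y‖ := by linarith
        have h6 : (ctil/2) * t ≤ 2^ℓ * ‖T w - T y‖ := by
          have h7 : ctil * (‖x-y‖/2) ≤ ctil * ‖w - y‖ := mul_le_mul_of_nonneg_left h5 hctil.le
          calc (ctil/2) * t = 2^ℓ * (ctil * (‖x-y‖/2)) := by rw [htdef]; ring
            _ ≤ 2^ℓ * ‖T w - T y‖ := mul_le_mul_of_nonneg_left (by linarith) hpl.le
        have h8 : bR d (2^ℓ * ‖T w - T y‖) ≤ M₁ * B := by
          have h9 := bR_anti d h6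
          have h10 := hkey t (by linarith)
          rw [hBt]; linarith
        calc f w = bR d (2^n * ‖x-w‖) * bR d (2^ℓ * ‖T w - T y‖) := by
              simp only [hfdef]; rw [e1, e2]
          _ ≤ bR d (2^n * ‖x-w‖) * (M₁ * B) :=
              mul_le_mul_of_nonneg_left h8 (bR_pos d _).le
          _ = M₁ * B * bFun d ((2:ℝ)^n • (x - w)) := by rw [e1]; ring
          _ ≤ g w := by
              simp only [hg]
              exact le_add_of_nonneg_right (mul_nonneg hD0 (bFun_nonneg d _))
      · -- far region
        push_neg at hw
        have h5 : pm * t / 2 ≤ 2^n * ‖x - w‖ := by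
          have h6 : (2:ℝ)^n = pm * 2^ℓ := by rw [hpm, hnm, pow_add]
          calc pm * t / 2 = (pm * 2^ℓ) * (‖x-y‖/2) := by rw [htdef]; ring
            _ ≤ (pm * 2^ℓ) * ‖x - w‖ := mul_le_mul_of_nonneg_left hw.le (by positivity)
            _ = 2^n * ‖x - w‖ := by rw [h6]
        have h7 : (1:ℝ) < pm * t / 2 := by
          have h7a : t ≤ pm * t := le_mul_of_one_le_left ht0 hpm1
          linarith
        have key2 : ((2:ℝ)⁻¹) ^ (-s) = (2:ℝ)^s := by
          rw [Real.inv_rpow (by norm_num : (0:ℝ) ≤ 2), Real.rpow_neg (by norm_num : (0:ℝ) ≤ 2),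
            inv_inv]
        have h10 : bR d (pm * t / 2) = D := by
          rw [bR_eq d h7, hse, hD, hBt, bR_eq d (by linarith : (1:ℝ) < t), hse]
          rw [show pm * t / 2 = pm * (t * 2⁻¹) by ring]
          rw [Real.mul_rpow hpm0.le (by positivity), Real.mul_rpow ht0 (by norm_num), key2]
          ring
        have h8 : bR d (2^n * ‖x - w‖) ≤ D := h10 ▸ bR_anti d h5
        calc f w = bR d (2^n * ‖x-w‖) * bR d (2^ℓ * ‖T w - T y‖) := by
              simp only [hfdef]; rw [e1, e2]
          _ ≤ D * bR d (ctil * 2^ℓ * ‖w - y‖) :=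
              mul_le_mul h8 hTb (bR_pos d _).le hD0
          _ = D * bFun d ((ctil * 2^ℓ) • (w - y)) := by rw [e3]
          _ ≤ g w := by
              simp only [hg]
              exact le_add_of_nonneg_left
                (mul_nonneg (mul_nonneg hM₁0.le hB0.le) (bFun_nonneg d _))
    have h1 : ∫ w in K, f w ≤ ∫ w in K, g w :=
      setIntegral_mono_on hfi hgInt.integrableOn hK.measurableSet (fun w _ => hpw w)
    have h2 : ∫ w in K, g w ≤ ∫ w, g w := by
      refine setIntegral_le_integral hgInt (ae_of_all _ fun w => ?_)
      simp only [hg]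
      exact add_nonneg (mul_nonneg (mul_nonneg hM₁0.le hB0.le) (bFun_nonneg d _))
        (mul_nonneg hD0 (bFun_nonneg d _))
    have h3 : ∫ w, g w = M₁ * B * ((((2:ℝ)^n)^d)⁻¹ * A) + D * (((ctil*2^ℓ)^d)⁻¹ * A) := by
      simp only [hg]
      rw [integral_add (hInt1.const_mul _) (hI2.1.const_mul _),
        integral_const_mul, integral_const_mul, hval1, hI2.2]
    have hE2 : (2:ℝ)^(d*n) * (((ctil*2^ℓ)^d)⁻¹) * pm^(-s) ≤ (ctil⁻¹)^d := by
      have e1 : ((ctil*2^ℓ):ℝ)^d = ctil^d * 2^(ℓ*d) := by rw [mul_pow, ← pow_mul]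
      have e2 : (2:ℝ)^(d*n) = pm^d * 2^(ℓ*d) := by
        rw [hpm, ← pow_mul, ← pow_add]
        congr 1
        rw [hnm]; ring
      have e3 : pm^d * pm^(-s) ≤ 1 := by
        rw [← Real.rpow_natCast pm d, ← Real.rpow_add hpm0]
        refine Real.rpow_le_one_of_one_le_of_nonpos hpm1 ?_
        rw [hs]; linarith
      have hctd : (0:ℝ) < ctil^d := by positivity
      have hl2 : (0:ℝ) < (2:ℝ)^(ℓ*d) := by positivity
      have e4 : (2:ℝ)^(d*n) * (((ctil*2^ℓ)^d)⁻¹) * pm^(-s)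
          = (ctil^d)⁻¹ * (pm^d * pm^(-s)) := by
        rw [e1, e2]
        field_simp
      rw [e4, inv_pow]
      calc (ctil^d)⁻¹ * (pm^d * pm^(-s)) ≤ (ctil^d)⁻¹ * 1 :=
            mul_le_mul_of_nonneg_left e3 (by positivity)
        _ = (ctil^d)⁻¹ := mul_one _
    have hsum : M₁ + 2^s*(ctil⁻¹)^d ≤ 2^s + M₁ + 2^s*(ctil⁻¹)^d + 1 := by linarith
    calc (2:ℝ)^(d*n) * ∫ w in K, f w
        ≤ (2:ℝ)^(d*n) * ∫ w, g w :=
          mul_le_mul_of_nonneg_left (h1.trans h2) (by positivity)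
      _ = M₁ * A * B * ((2:ℝ)^(d*n) * (((2:ℝ)^n)^d)⁻¹)
          + (2^s * A * B) * ((2:ℝ)^(d*n) * (((ctil*2^ℓ)^d)⁻¹) * pm^(-s)) := by
          rw [h3, hD]; ring
      _ ≤ M₁ * A * B * 1 + (2^s * A * B) * ((ctil⁻¹)^d) := by
          have hnn : (0:ℝ) ≤ 2^s * A * B := mul_nonneg (mul_nonneg h2s0.le hA0) hB0.le
          have := mul_le_mul_of_nonneg_left hE2 hnn
          rw [hcancel]
          linarith
      _ = (M₁ + 2^s*(ctil⁻¹)^d) * (A * B) := by ring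
      _ ≤ (2^s + M₁ + 2^s*(ctil⁻¹)^d + 1) * ((A+1) * B) := by
          refine mul_le_mul hsum ?_ (mul_nonneg hA0 hB0.le) ?_
          · exact mul_le_mul_of_nonneg_right (by linarith) hB0.le
          · have : (0:ℝ) ≤ 2^s*(ctil⁻¹)^d := mul_nonneg h2s0.le hcd0.le
            linarith
      _ = C * B := by rw [hC]; ring
end
end
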